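/- Let $f_{n}(x)$ denote the Fibonacci polynomials, defined by $f_1(x) = 1$, $f_2(x) = x$, $f_{n+1}(x) = x f_n(x) + f_{n-1}(x)$. Then $f_{n+1}(x-1) = \sum_{k=0}^n (-1)^{n-k} f^{(k+1)}_{n-k+1} x^k$, where $f^{(k+1)}_{n-k+1} = \sum_{j_1 + \cdots + j_{k+1} = n-k,\ j_t \ge 0} f_{j_1+1} \cdots f_{j_{k+1}+1}$ are the convolved Fibonacci numbers. -/

import Mathlib

open Polynomial PowerSeries Finset

noncomputable def fibPS : PowerSeries ℤ := PowerSeries.mk fun j => (Nat.fib (j + 1) : ℤ)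

lemma coeff_fibPS (m : ℕ) : PowerSeries.coeff m fibPS = (Nat.fib (m + 1) : ℤ) := by
  simp [fibPS]

lemma constantCoeff_fibPS : PowerSeries.constantCoeff fibPS = 1 := by
  simp [fibPS]

lemma fibPS_mul_unit :
    fibPS * (1 - PowerSeries.X - PowerSeries.X ^ 2) = 1 := by
  have h : fibPS * (1 - PowerSeries.X - PowerSeries.X ^ 2)
      = fibPS - PowerSeries.X * fibPS - PowerSeries.X * (PowerSeries.X * fibPS) := by ring
  rw [h]
  ext n
  match n with
  | 0 => simp [coeff_fibPS, PowerSeries.coeff_zero_eq_constantCoeff, constantCoeff_fibPS]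
  | 1 =>
    simp [coeff_fibPS, PowerSeries.coeff_succ_X_mul, PowerSeries.coeff_zero_eq_constantCoeff,
      PowerSeries.coeff_one]
  | (n+2) =>
    simp only [map_sub, PowerSeries.coeff_succ_X_mul, coeff_fibPS, PowerSeries.coeff_one,
      Nat.add_eq_zero, and_false, if_false, OfNat.ofNat_ne_zero]
    rw [Nat.fib_add_two (n := n + 1)]
    push_cast
    ring

lemma coeff_pow_zero' (k : ℕ) : PowerSeries.coeff 0 (fibPS ^ k) = 1 := by
  rw [PowerSeries.coeff_zero_eq_constantCoeff, map_pow]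
  simp [fibPS]

lemma coeff_pow_one_succ (k : ℕ) :
    PowerSeries.coeff 1 (fibPS ^ (k + 1)) = PowerSeries.coeff 1 (fibPS ^ k) + 1 := by
  rw [pow_succ, PowerSeries.coeff_one_mul]
  simp [constantCoeff_fibPS, map_pow, coeff_fibPS]

lemma coeff_pow_rec (k m : ℕ) :
    PowerSeries.coeff (m + 2) (fibPS ^ (k + 1)) =
      PowerSeries.coeff (m + 2) (fibPS ^ k) +
        PowerSeries.coeff (m + 1) (fibPS ^ (k + 1)) +
          PowerSeries.coeff m (fibPS ^ (k + 1)) := by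
  have h : (fibPS : PowerSeries ℤ) ^ k
      = fibPS ^ (k + 1) - PowerSeries.X * fibPS ^ (k + 1)
        - PowerSeries.X * (PowerSeries.X * fibPS ^ (k + 1)) := by
    calc (fibPS : PowerSeries ℤ) ^ k
        = fibPS ^ k * (fibPS * (1 - PowerSeries.X - PowerSeries.X ^ 2)) := by
          rw [fibPS_mul_unit, mul_one]
      _ = _ := by ring
  have h2 := congrArg (PowerSeries.coeff (m + 2)) h
  simp only [map_sub, PowerSeries.coeff_succ_X_mul] at h2
  linarith

lemma sum_antidiagonalTuple_succ {M : Type*} [AddCommMonoid M] (k n : ℕ)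
    (g : (Fin (k + 1) → ℕ) → M) :
    ∑ x ∈ Finset.Nat.antidiagonalTuple (k + 1) n, g x =
      ∑ p ∈ Finset.HasAntidiagonal.antidiagonal n, ∑ x ∈ Finset.Nat.antidiagonalTuple k p.2,
        g (Fin.cons p.1 x) := by
  rw [Finset.sum_sigma']
  refine Finset.sum_nbij'
    (fun (y : Fin (k + 1) → ℕ) =>
      (⟨(y 0, ∑ i : Fin k, y i.succ), fun i : Fin k => y i.succ⟩ : (_ : ℕ × ℕ) × (Fin k → ℕ)))
    (fun q => Fin.cons q.1.1 q.2) ?_ ?_ ?_ ?_ ?_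
  · intro y hy
    rw [Finset.Nat.mem_antidiagonalTuple] at hy
    rw [Finset.mem_sigma, Finset.HasAntidiagonal.mem_antidiagonal, Finset.Nat.mem_antidiagonalTuple]
    exact ⟨by rw [← hy, Fin.sum_univ_succ], rfl⟩
  · intro q hq
    rw [Finset.mem_sigma, Finset.HasAntidiagonal.mem_antidiagonal, Finset.Nat.mem_antidiagonalTuple] at hq
    rw [Finset.Nat.mem_antidiagonalTuple, Fin.sum_cons, hq.2, hq.1]
  · intro y _
    exact (Fin.cons_self_tail y).symm ▸ rfl
  · intro q hq
    rw [Finset.mem_sigma, Finset.HasAntidiagonal.mem_antidiagonal, Finset.Nat.mem_antidiagonalTuple] at hq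
    ext
    · simp
    · simp [hq.2]
    · simp
  · intro y _
    exact congrArg g (Fin.cons_self_tail y).symm

lemma sum_antidiagonalTuple_eq_coeff (k m : ℕ) :
    (∑ j ∈ Finset.Nat.antidiagonalTuple k m, ∏ t : Fin k, (Nat.fib (j t + 1) : ℤ)) =
      PowerSeries.coeff m (fibPS ^ k) := by
  induction k generalizing m with
  | zero =>
    match m with
    | 0 => simp [Finset.Nat.antidiagonalTuple_zero_zero]
    | m + 1 => simp [Finset.Nat.antidiagonalTuple_zero_succ, PowerSeries.coeff_one]
  | succ k ih =>
    rw [pow_succ', PowerSeries.coeff_mul, sum_antidiagonalTuple_succ]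
    refine Finset.sum_congr rfl fun p _ => ?_
    simp only [Fin.prod_univ_succ, Fin.cons_zero, Fin.cons_succ]
    rw [← Finset.mul_sum, ih, coeff_fibPS]

lemma coeff_sum_C_mul_X_pow (N : ℕ) (b : ℕ → ℤ) (m : ℕ) :
    (∑ k ∈ Finset.range N, Polynomial.C (b k) * Polynomial.X ^ k).coeff m
      = if m < N then b m else 0 := by
  rw [Polynomial.finset_sum_coeff]
  simp only [Polynomial.coeff_C_mul, Polynomial.coeff_X_pow, mul_ite, mul_one, mul_zero]
  rw [Finset.sum_ite_eq (Finset.range N) m b]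
  simp [Finset.mem_range]

/-- The expansion of the Fibonacci polynomial `f_{n+1}(x - 1)` in powers of `x`
has the convolved Fibonacci numbers (up to sign) as coefficients. -/
theorem fibPoly_comp_sub_one_eq_convolved_fib
    (F : ℕ → Polynomial ℤ) (h1 : F 1 = 1) (h2 : F 2 = Polynomial.X)
    (hrec : ∀ m : ℕ, F (m + 3) = Polynomial.X * F (m + 2) + F (m + 1))
    (n : ℕ) :
    (F (n + 1)).comp (Polynomial.X - 1) =
      ∑ k ∈ Finset.range (n + 1),
        Polynomial.C ((-1 : ℤ) ^ (n - k) *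
            ∑ j ∈ Finset.Nat.antidiagonalTuple (k + 1) (n - k),
              ∏ t : Fin (k + 1), (Nat.fib (j t + 1) : ℤ)) *
          Polynomial.X ^ k := by
  simp only [sum_antidiagonalTuple_eq_coeff]
  induction n using Nat.twoStepInduction with
  | zero => simp [h1, coeff_pow_zero']
  | one =>
    rw [h2, Polynomial.X_comp]
    rw [Finset.sum_range_succ, Finset.sum_range_one]
    simp [coeff_pow_zero', coeff_fibPS]
    ring
  | more n ih1 ih2 =>
    rw [show n + 2 + 1 = n + 3 from rfl, hrec n, Polynomial.add_comp, Polynomial.mul_comp,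
      Polynomial.X_comp, ih1, ih2]
    ext m
    rw [Polynomial.coeff_add, sub_mul, one_mul, Polynomial.coeff_sub,
      coeff_sum_C_mul_X_pow, coeff_sum_C_mul_X_pow, coeff_sum_C_mul_X_pow]
    match m with
    | 0 =>
      rw [Polynomial.mul_coeff_zero, Polynomial.coeff_X_zero, zero_mul]
      rw [if_pos (by omega), if_pos (by omega), if_pos (by omega)]
      simp only [Nat.sub_zero, zero_add, pow_one]
      have h0 := coeff_pow_rec 0 n
      simp only [pow_zero, pow_one, PowerSeries.coeff_one, Nat.add_eq_zero, and_false,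
        if_false, OfNat.ofNat_ne_zero, zero_add] at h0
      linear_combination (-(-1 : ℤ) ^ n) * h0
    | j + 1 =>
      rw [Polynomial.coeff_X_mul, coeff_sum_C_mul_X_pow]
      rcases Nat.lt_or_ge j n with hj | hj
      · obtain ⟨d, rfl⟩ : ∃ d, n = j + 1 + d := ⟨n - (j + 1), by omega⟩
        rw [if_pos (by omega), if_pos (by omega), if_pos (by omega), if_pos (by omega)]
        rw [show j + 1 + d + 1 - j = d + 2 from by omega,
          show j + 1 + d + 1 - (j + 1) = d + 1 from by omega,
          show j + 1 + d - (j + 1) = d from by omega,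
          show j + 1 + d + 2 - (j + 1) = d + 2 from by omega]
        linear_combination (-(-1 : ℤ) ^ d) * coeff_pow_rec (j + 1) d
      · rcases Nat.lt_or_ge j (n + 1) with hj1 | hj1
        · obtain rfl : j = n := by omega
          rw [if_pos (by omega), if_pos (by omega), if_neg (by omega), if_pos (by omega)]
          rw [show j + 1 - j = 1 from by omega, show j + 1 - (j + 1) = 0 from by omega,
            show j + 2 - (j + 1) = 1 from by omega]
          have := coeff_pow_one_succ (j + 1)
          have h00 := coeff_pow_zero' (j + 2)
          linear_combination this - h00
        · rcases Nat.lt_or_ge j (n + 2) with hj2 | hj2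
          · obtain rfl : j = n + 1 := by omega
            rw [if_pos (by omega), if_neg (by omega), if_neg (by omega), if_pos (by omega)]
            rw [show n + 1 - (n + 1) = 0 from by omega, show n + 2 - (n + 2) = 0 from by omega]
            rw [coeff_pow_zero', coeff_pow_zero']
            ring
          · rw [if_neg (by omega), if_neg (by omega), if_neg (by omega), if_neg (by omega)]
            ring
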